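/- arXiv:2003.12225 — 5 statements merged into one kernel-verified Lean document; each statement's English description precedes it below -/
import Mathlib

section
/- Let X be a random variable uniformly distributed on a finite set 𝒳, and let Z be a random variable taking values in a finite set 𝒵 (with arbitrary joint distribution consistent with X uniform). Then for every s ∈ (0,1], the conditional Rényi entropy H_{1+s}(X|Z) := (-1/s) · log ( Σ_{z} P_Z(z) Σ_{x} P_{X|Z}(x|z)^{1+s} ) satisfies H_{1+s}(X|Z) ≥ log(|𝒳| / |𝒵|). -/
open Finset

/-- If `X` is uniform on a finite set `𝒳` and `Z` is any finite random variable,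
then the conditional Rényi entropy of order `1+s` satisfies
`H_{1+s}(X|Z) ≥ log(|𝒳|/|𝒵|)`. The joint distribution is `p : 𝒳 → 𝒵 → ℝ`,
`P_Z z = ∑ x, p x z`, and `P_{X|Z}(x|z) = p x z / P_Z z`. -/
theorem renyi_conditional_entropy_uniform_lower_bound
    {𝒳 𝒵 : Type} [Fintype 𝒳] [Fintype 𝒵] [Nonempty 𝒳] [Nonempty 𝒵]
    (p : 𝒳 → 𝒵 → ℝ)
    (hp : ∀ x z, 0 ≤ p x z)
    (hsum : ∑ x : 𝒳, ∑ z : 𝒵, p x z = 1)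
    (huniform : ∀ x : 𝒳, ∑ z : 𝒵, p x z = 1 / (Fintype.card 𝒳 : ℝ))
    (s : ℝ) (hs0 : 0 < s) (hs1 : s ≤ 1) :
    Real.log ((Fintype.card 𝒳 : ℝ) / (Fintype.card 𝒵 : ℝ)) ≤
      (-1 / s) *
        Real.log (∑ z : 𝒵, (∑ x : 𝒳, p x z) *
          ∑ x : 𝒳, (p x z / ∑ x' : 𝒳, p x' z) ^ ((1 : ℝ) + s)) := by
  classical
  set M := (Fintype.card 𝒳 : ℝ) with hMdef
  set N := (Fintype.card 𝒵 : ℝ) with hNdef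
  have hM : (0:ℝ) < M := Nat.cast_pos.mpr Fintype.card_pos
  have hN : (0:ℝ) < N := Nat.cast_pos.mpr Fintype.card_pos
  set q : 𝒵 → ℝ := fun z => ∑ x, p x z with hqdef
  have hq0 : ∀ z, 0 ≤ q z := fun z => Finset.sum_nonneg fun x _ => hp x z
  have hpM : ∀ x z, p x z ≤ 1 / M := fun x z =>
    (huniform x) ▸ Finset.single_le_sum (fun z _ => hp x z) (mem_univ z)
  have hqzero : ∀ z, q z = 0 → ∀ x, p x z = 0 := by
    intro z hz x
    exact (Finset.sum_eq_zero_iff_of_nonneg (fun x _ => hp x z)).mp hz x (mem_univ x)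
  -- Step 1: rewrite
  have hA : (∑ z : 𝒵, (∑ x : 𝒳, p x z) * ∑ x : 𝒳, (p x z / ∑ x' : 𝒳, p x' z) ^ ((1:ℝ)+s))
      = ∑ z : 𝒵, ∑ x : 𝒳, p x z * (p x z / q z) ^ s := by
    refine Finset.sum_congr rfl fun z _ => ?_
    show q z * (∑ x : 𝒳, (p x z / q z) ^ ((1:ℝ)+s)) = _
    rw [Finset.mul_sum]
    refine Finset.sum_congr rfl fun x _ => ?_
    rcases eq_or_lt_of_le (hq0 z) with hz | hz
    · have h0 : p x z = 0 := hqzero z hz.symm x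
      simp [h0, ← hz, Real.zero_rpow (by linarith : (1:ℝ)+s ≠ 0),
        Real.zero_rpow (ne_of_gt hs0)]
    · have hr : (p x z / q z) ^ ((1:ℝ)+s) = (p x z / q z) * (p x z / q z) ^ s := by
        rcases eq_or_lt_of_le (hp x z) with hx | hx
        · simp [← hx, Real.zero_rpow (by linarith : (1:ℝ)+s ≠ 0),
            Real.zero_rpow (ne_of_gt hs0)]
        · rw [Real.rpow_add (div_pos hx hz), Real.rpow_one]
      rw [hr, ← mul_assoc]
      congr 1
      field_simp
  rw [hA]
  set S := ∑ z : 𝒵, ∑ x : 𝒳, p x z * (p x z / q z) ^ s with hSdef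
  -- positivity of S
  have hSpos : 0 < S := by
    have hex : ∃ x z, 0 < p x z := by
      by_contra h
      push_neg at h
      have : ∀ x z, p x z = 0 := fun x z => le_antisymm (h x z) (hp x z)
      simp [this] at hsum
    obtain ⟨x0, z0, hx0⟩ := hex
    have hqz0 : 0 < q z0 :=
      lt_of_lt_of_le hx0 (Finset.single_le_sum (fun x _ => hp x z0) (mem_univ x0))
    refine Finset.sum_pos' (fun z _ => Finset.sum_nonneg fun x _ =>
      mul_nonneg (hp x z) (Real.rpow_nonneg (div_nonneg (hp x z) (hq0 z)) s)) ⟨z0, mem_univ z0, ?_⟩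
    refine Finset.sum_pos' (fun x _ =>
      mul_nonneg (hp x z0) (Real.rpow_nonneg (div_nonneg (hp x z0) (hq0 z0)) s)) ⟨x0, mem_univ x0, ?_⟩
    exact mul_pos hx0 (Real.rpow_pos_of_pos (div_pos hx0 hqz0) s)
  -- Step 2: Jensen over the product type
  have hB : S ≤ (∑ z : 𝒵, ∑ x : 𝒳, p x z * (p x z / q z)) ^ s := by
    have hw : ∀ i ∈ (univ : Finset (𝒳 × 𝒵)), 0 ≤ p i.1 i.2 := fun i _ => hp i.1 i.2
    have hw' : ∑ i : 𝒳 × 𝒵, p i.1 i.2 = 1 := by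
      rw [Fintype.sum_prod_type]; exact hsum
    have hz : ∀ i ∈ (univ : Finset (𝒳 × 𝒵)), 0 ≤ (p i.1 i.2 / q i.2) ^ s :=
      fun i _ => Real.rpow_nonneg (div_nonneg (hp i.1 i.2) (hq0 i.2)) s
    have hp1 : (1:ℝ) ≤ 1/s := by
      rw [le_div_iff₀ hs0]; linarith
    have key := Real.arith_mean_le_rpow_mean (univ : Finset (𝒳 × 𝒵))
      (fun i => p i.1 i.2) (fun i => (p i.1 i.2 / q i.2) ^ s) hw hw' hz hp1
    have hsimp : ∀ i : 𝒳 × 𝒵, ((p i.1 i.2 / q i.2) ^ s) ^ ((1:ℝ)/s) = p i.1 i.2 / q i.2 := by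
      intro i
      rw [← Real.rpow_mul (div_nonneg (hp i.1 i.2) (hq0 i.2)), mul_one_div,
        div_self (ne_of_gt hs0), Real.rpow_one]
    simp only [hsimp] at key
    rw [one_div_one_div] at key
    calc S = ∑ i : 𝒳 × 𝒵, p i.1 i.2 * (p i.1 i.2 / q i.2) ^ s := by
            rw [Fintype.sum_prod_type, hSdef]
            exact Finset.sum_comm
      _ ≤ (∑ i : 𝒳 × 𝒵, p i.1 i.2 * (p i.1 i.2 / q i.2)) ^ s := key
      _ = (∑ z : 𝒵, ∑ x : 𝒳, p x z * (p x z / q z)) ^ s := by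
            rw [Fintype.sum_prod_type]
            congr 1
            exact Finset.sum_comm
  -- Step 3: bound the inner expectation
  have hC : (∑ z : 𝒵, ∑ x : 𝒳, p x z * (p x z / q z)) ≤ N / M := by
    have hper : ∀ z : 𝒵, (∑ x : 𝒳, p x z * (p x z / q z)) ≤ 1 / M := by
      intro z
      rcases eq_or_lt_of_le (hq0 z) with hz | hz
      · have h0 : ∀ x, p x z = 0 := hqzero z hz.symm
        simp [h0]
        positivity
      · calc (∑ x : 𝒳, p x z * (p x z / q z))
            ≤ ∑ x : 𝒳, (1/M) * (p x z / q z) := by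
              refine Finset.sum_le_sum fun x _ => ?_
              exact mul_le_mul_of_nonneg_right (hpM x z)
                (div_nonneg (hp x z) (hq0 z))
          _ = (1/M) * (q z / q z) := by
              rw [← Finset.mul_sum, ← Finset.sum_div]
          _ = 1 / M := by rw [div_self (ne_of_gt hz), mul_one]
    calc (∑ z : 𝒵, ∑ x : 𝒳, p x z * (p x z / q z)) ≤ ∑ _z : 𝒵, 1/M :=
          Finset.sum_le_sum fun z _ => hper z
      _ = N / M := by rw [Finset.sum_const, card_univ, nsmul_eq_mul]; ring
  have hD : S ≤ (N/M) ^ s := by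
    refine hB.trans (Real.rpow_le_rpow ?_ hC (le_of_lt hs0))
    exact Finset.sum_nonneg fun z _ => Finset.sum_nonneg fun x _ =>
      mul_nonneg (hp x z) (div_nonneg (hp x z) (hq0 z))
  have hlog : Real.log S ≤ s * Real.log (N/M) := by
    calc Real.log S ≤ Real.log ((N/M)^s) := Real.log_le_log hSpos hD
      _ = s * Real.log (N/M) := Real.log_rpow (div_pos hN hM) s
  have hMN : Real.log (M/N) = -(Real.log (N/M)) := by
    rw [Real.log_div (ne_of_gt hM) (ne_of_gt hN), Real.log_div (ne_of_gt hN) (ne_of_gt hM)]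
    ring
  have hc : (-1 : ℝ)/s ≤ 0 := by
    apply div_nonpos_of_nonpos_of_nonneg <;> linarith
  have := mul_le_mul_of_nonpos_left hlog hc
  have hcs : (-1/s) * (s * Real.log (N/M)) = -(Real.log (N/M)) := by
    field_simp
  rw [hMN]
  linarith [hcs ▸ this]
end

section
/- Let q be a prime power and n, m positive integers. Choose V_1, …, V_m independently and uniformly from F_q. Define the n×m matrix U_1 by (U_1)_{i,j} = (V_j)^i for 1 ≤ i ≤ n, 1 ≤ j ≤ m. Then for any two distinct row vectors x ≠ x' ∈ F_q^n, Pr[ x U_1 = x' U_1 ] ≤ (n/q)^m. -/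
open Finset

/-- Lemma (Jaggi et al.): choosing `V_1,…,V_m` i.i.d. uniform in `F_q` and
forming the `n × m` matrix `U_1` with `(U_1)_{i,j} = (V_j)^i`, for any two
distinct row vectors `x ≠ x'` we have `Pr[x U_1 = x' U_1] ≤ (n/q)^m`.
The probability is the fraction of tuples `V ∈ F_q^m` with `x U_1 = x' U_1`. -/
theorem vandermonde_collision_probability
    {F : Type} [Field F] [Fintype F] {q : ℕ} (hq : Fintype.card F = q)
    (n m : ℕ) (hn : 0 < n) (hm : 0 < m)
    (x x' : Fin n → F) (hxx : x ≠ x') :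
    (Nat.card {V : Fin m → F //
        ∀ j : Fin m, (∑ i : Fin n, x i * (V j) ^ ((i : ℕ) + 1))
          = ∑ i : Fin n, x' i * (V j) ^ ((i : ℕ) + 1)} : ℝ) / (q : ℝ) ^ m
      ≤ ((n : ℝ) / (q : ℝ)) ^ m := by
  classical
  -- the polynomial whose roots are the "bad" values
  set p : Polynomial F := ∑ i : Fin n, Polynomial.C (x i - x' i) * Polynomial.X ^ ((i : ℕ) + 1)
    with hp_def
  have hcoeff : ∀ i : Fin n, p.coeff ((i : ℕ) + 1) = x i - x' i := by
    intro i
    rw [hp_def, Polynomial.finset_sum_coeff]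
    rw [Finset.sum_eq_single i]
    · rw [Polynomial.coeff_C_mul, Polynomial.coeff_X_pow, if_pos rfl, mul_one]
    · intro b _ hb
      rw [Polynomial.coeff_C_mul, Polynomial.coeff_X_pow, if_neg, mul_zero]
      intro h
      exact hb (Fin.ext (by omega))
    · simp
  have hp0 : p ≠ 0 := by
    obtain ⟨i, hi⟩ : ∃ i, x i ≠ x' i := Function.ne_iff.mp hxx
    intro h
    have := hcoeff i
    rw [h, Polynomial.coeff_zero] at this
    exact hi (by linear_combination -this)
  have hdeg : p.natDegree ≤ n := by
    rw [hp_def]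
    refine Polynomial.natDegree_sum_le_of_forall_le _ _ ?_
    intro i _
    refine le_trans (Polynomial.natDegree_C_mul_le _ _) ?_
    simp [Polynomial.natDegree_X_pow]
  -- the set of roots
  set S : Finset F := p.roots.toFinset with hS_def
  have hScard : S.card ≤ n := by
    refine le_trans (Multiset.toFinset_card_le _) (le_trans ?_ hdeg)
    exact_mod_cast Polynomial.card_roots' p
  have hmem : ∀ v : F, (∑ i : Fin n, x i * v ^ ((i : ℕ) + 1))
      = (∑ i : Fin n, x' i * v ^ ((i : ℕ) + 1)) ↔ v ∈ S := by
    intro v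
    have heval : p.eval v = ∑ i : Fin n, (x i - x' i) * v ^ ((i : ℕ) + 1) := by
      rw [hp_def, Polynomial.eval_finset_sum]
      simp
    rw [hS_def, Multiset.mem_toFinset, Polynomial.mem_roots hp0, Polynomial.IsRoot.def, heval]
    constructor
    · intro h
      simp only [sub_mul]
      rw [Finset.sum_sub_distrib, h, sub_self]
    · intro h
      simp only [sub_mul] at h
      rw [Finset.sum_sub_distrib, sub_eq_zero] at h
      exact h
  -- count the tuples
  have hcount : Nat.card {V : Fin m → F //
      ∀ j : Fin m, (∑ i : Fin n, x i * (V j) ^ ((i : ℕ) + 1))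
        = ∑ i : Fin n, x' i * (V j) ^ ((i : ℕ) + 1)} ≤ n ^ m := by
    have e : {V : Fin m → F // ∀ j : Fin m,
        (∑ i : Fin n, x i * (V j) ^ ((i : ℕ) + 1))
          = ∑ i : Fin n, x' i * (V j) ^ ((i : ℕ) + 1)}
        ≃ (Fin m → {v : F // v ∈ S}) := by
      refine Equiv.trans ?_ (Equiv.subtypePiEquivPi (p := fun _ v => v ∈ S))
      exact Equiv.subtypeEquivRight (fun V => by
        constructor <;> intro h j
        · exact (hmem (V j)).mp (h j)
        · exact (hmem (V j)).mpr (h j))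
    calc Nat.card _ = Fintype.card (Fin m → {v : F // v ∈ S}) := by
          rw [Nat.card_eq_fintype_card, Fintype.card_congr e]
      _ = S.card ^ m := by simp [Fintype.card_fun]
      _ ≤ n ^ m := Nat.pow_le_pow_left hScard m
  -- conclude
  have hq2 : 0 < q := by
    rw [← hq]; exact Fintype.card_pos
  have hqR : (0:ℝ) < (q:ℝ) ^ m := by positivity
  rw [div_pow, div_le_div_iff₀ hqR hqR]
  have : (Nat.card {V : Fin m → F //
      ∀ j : Fin m, (∑ i : Fin n, x i * (V j) ^ ((i : ℕ) + 1))
        = ∑ i : Fin n, x' i * (V j) ^ ((i : ℕ) + 1)} : ℝ) ≤ (n:ℝ) ^ m := by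
    exact_mod_cast hcount
  nlinarith [hqR]
end

section
/- Let q be a prime power, n, m positive integers with m ≥ m_0, and let U_1 be the random n×m matrix with entries (U_1)_{i,j} = (V_j)^i for independent uniform V_1,…,V_m ∈ F_q. Then for any fixed matrix A ∈ F_q^{m_0 × n}, the probability that rank(A U_1) = rank(A) is at least 1 − q^{m_0} (n/q)^m. -/
open Finset Polynomial Matrix

private lemma aux_rank_eq {F : Type} [Field F] {m0 n k : ℕ}
    (A : Matrix (Fin m0) (Fin n) F) (U : Matrix (Fin n) (Fin k) F)
    (h : ∀ z : Fin m0 → F, z ᵥ* (A * U) = 0 → z ᵥ* A = 0) :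
    (A * U).rank = A.rank := by
  have hker : LinearMap.ker (A * U).vecMulLinear = LinearMap.ker A.vecMulLinear := by
    ext z
    simp only [LinearMap.mem_ker, Matrix.vecMulLinear_apply]
    refine ⟨h z, fun hz => ?_⟩
    rw [← Matrix.vecMul_vecMul, hz, Matrix.zero_vecMul]
  have hr : ∀ {l : ℕ} (B : Matrix (Fin m0) (Fin l) F),
      B.rank = Module.finrank F (LinearMap.range B.vecMulLinear) := by
    intro l B
    rw [← Matrix.rank_transpose, Matrix.rank, Matrix.mulVecLin_transpose]
  have h1 := LinearMap.finrank_range_add_finrank_ker (A * U).vecMulLinear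
  have h2 := LinearMap.finrank_range_add_finrank_ker A.vecMulLinear
  rw [hker] at h1
  rw [hr (A * U), hr A]
  omega

/-- For the random Vandermonde-type `n × m` matrix `U_1` with
`(U_1)_{i,j} = (V_j)^i` for i.i.d. uniform `V_1,…,V_m ∈ F_q`, and any fixed
`m_0 × n` matrix `A`, the probability that `rank(A U_1) = rank(A)` is at
least `1 − q^{m_0} (n/q)^m`. -/
theorem vandermonde_rank_preservation_probability
    {F : Type} [Field F] [Fintype F] [DecidableEq F] {q : ℕ}
    (hq : Fintype.card F = q)
    (n m m0 : ℕ) (hn : 0 < n) (hm : 0 < m) (hm0 : m0 ≤ m)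
    (A : Matrix (Fin m0) (Fin n) F) :
    (1 : ℝ) - (q : ℝ) ^ m0 * ((n : ℝ) / (q : ℝ)) ^ m
      ≤ (Nat.card {V : Fin m → F //
          (A * (Matrix.of fun (i : Fin n) (j : Fin m) => (V j) ^ ((i : ℕ) + 1))).rank
            = A.rank} : ℝ) / (q : ℝ) ^ m := by
  classical
  have hq1 : 1 ≤ q := by rw [← hq]; exact Fintype.card_pos
  have hq0 : (0:ℝ) < (q:ℝ) := by exact_mod_cast hq1
  -- the polynomial associated to a vector x
  set P : (Fin n → F) → F[X] := fun x => ∑ i : Fin n, C (x i) * X ^ ((i : ℕ) + 1) with hP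
  have hPeval : ∀ (x : Fin n → F) (v : F), (P x).eval v = ∑ i : Fin n, x i * v ^ ((i:ℕ)+1) := by
    intro x v; simp [hP, eval_finset_sum]
  have hPdeg : ∀ x : Fin n → F, (P x).natDegree ≤ n := by
    intro x
    refine natDegree_sum_le_of_forall_le _ _ fun i _ => ?_
    refine (natDegree_mul_le).trans ?_
    simp [natDegree_X_pow]
  have hPne : ∀ x : Fin n → F, x ≠ 0 → P x ≠ 0 := by
    intro x hx
    obtain ⟨i0, hi0⟩ : ∃ i0, x i0 ≠ 0 := by
      by_contra hc
      push_neg at hc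
      exact hx (funext fun i => hc i)
    intro hzero
    have : (P x).coeff ((i0:ℕ)+1) = x i0 := by
      rw [hP]
      simp only [finset_sum_coeff, coeff_C_mul, coeff_X_pow]
      rw [Finset.sum_eq_single i0]
      · simp
      · intro b _ hb
        have hne : ((i0:ℕ)+1) ≠ ((b:ℕ)+1) := fun hh => hb (Fin.ext (by omega))
        simp [hne]
        exact fun h => absurd (Fin.ext h).symm hb
      · simp
    rw [hzero] at this
    simp at this
    exact hi0 this.symm
  -- matrix U from V
  set U : (Fin m → F) → Matrix (Fin n) (Fin m) F :=
    fun V => Matrix.of fun (i : Fin n) (j : Fin m) => (V j) ^ ((i : ℕ) + 1) with hU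
  set good : Finset (Fin m → F) := univ.filter fun V => (A * U V).rank = A.rank with hgood
  set bad : Finset (Fin m → F) := univ.filter fun V => ¬ (A * U V).rank = A.rank with hbad
  -- root sets
  set S : (Fin m0 → F) → Finset F := fun z =>
    if z ᵥ* A = 0 then ∅ else (P (z ᵥ* A)).roots.toFinset with hS
  have hScard : ∀ z, (S z).card ≤ n := by
    intro z
    rw [hS]
    by_cases hz : z ᵥ* A = 0
    · simp [hz]
    · simp only [hz, if_neg, if_false]
      calc ((P (z ᵥ* A)).roots.toFinset).card ≤ Multiset.card (P (z ᵥ* A)).roots :=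
            Multiset.toFinset_card_le _
        _ ≤ (P (z ᵥ* A)).natDegree := card_roots' _
        _ ≤ n := hPdeg _
  -- bad is covered by the union of root boxes
  have hsub : bad ⊆ (univ : Finset (Fin m0 → F)).biUnion
      (fun z => Fintype.piFinset fun _ : Fin m => S z) := by
    intro V hV
    rw [hbad, mem_filter] at hV
    obtain ⟨z, hz1, hz2⟩ : ∃ z : Fin m0 → F, z ᵥ* (A * U V) = 0 ∧ ¬ z ᵥ* A = 0 := by
      by_contra hc
      push_neg at hc
      exact hV.2 (aux_rank_eq A (U V) hc)
    refine Finset.mem_biUnion.2 ⟨z, Finset.mem_univ _, ?_⟩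
    rw [Fintype.mem_piFinset]
    intro j
    have hzero : ∀ j', ((z ᵥ* A) ᵥ* (U V)) j' = 0 := by
      rw [Matrix.vecMul_vecMul, hz1]
      exact fun j' => rfl
    have heval : (P (z ᵥ* A)).eval (V j) = 0 := by
      have := hzero j
      rw [hPeval]
      simpa [Matrix.vecMul, dotProduct, hU] using this
    rw [hS]
    simp only [hz2, if_neg, if_false]
    rw [Multiset.mem_toFinset, mem_roots (hPne _ hz2)]
    exact heval
  -- cardinality bounds
  have hbadcard : bad.card ≤ q ^ m0 * n ^ m := by
    calc bad.card ≤ ((univ : Finset (Fin m0 → F)).biUnion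
          (fun z => Fintype.piFinset fun _ : Fin m => S z)).card := Finset.card_le_card hsub
      _ ≤ ∑ z : Fin m0 → F, (Fintype.piFinset fun _ : Fin m => S z).card :=
          Finset.card_biUnion_le
      _ ≤ ∑ _z : Fin m0 → F, n ^ m := by
          refine Finset.sum_le_sum fun z _ => ?_
          rw [Fintype.card_piFinset]
          calc ∏ _j : Fin m, (S z).card ≤ ∏ _j : Fin m, n :=
                Finset.prod_le_prod (fun _ _ => Nat.zero_le _) fun _ _ => hScard z
            _ = n ^ m := by simp
      _ = q ^ m0 * n ^ m := by
          rw [Finset.sum_const, Finset.card_univ, Fintype.card_fun, hq]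
          simp [mul_comm]
  have htotal : good.card + bad.card = q ^ m := by
    rw [hgood, hbad, Finset.card_filter_add_card_filter_not, Finset.card_univ,
      Fintype.card_fun, hq, Fintype.card_fin]
  -- identify Nat.card with good.card
  have hcount : (Nat.card {V : Fin m → F //
      (A * (Matrix.of fun (i : Fin n) (j : Fin m) => (V j) ^ ((i : ℕ) + 1))).rank
        = A.rank}) = good.card := by
    rw [Nat.card_eq_fintype_card, Fintype.card_subtype]
  rw [hcount]
  -- real arithmetic
  have hgoodR : ((q:ℝ) ^ m - (q:ℝ) ^ m0 * (n:ℝ) ^ m) ≤ (good.card : ℝ) := by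
    have h1 : (good.card : ℝ) + (bad.card : ℝ) = (q:ℝ)^m := by exact_mod_cast htotal
    have h2 : (bad.card : ℝ) ≤ (q:ℝ)^m0 * (n:ℝ)^m := by
      exact_mod_cast hbadcard
    linarith
  have hqm : (0:ℝ) < (q:ℝ)^m := pow_pos hq0 m
  have hqne : (q:ℝ) ≠ 0 := hq0.ne'
  have key : (1:ℝ) - (q:ℝ)^m0 * ((n:ℝ)/(q:ℝ))^m
      = ((q:ℝ)^m - (q:ℝ)^m0 * (n:ℝ)^m) / (q:ℝ)^m := by
    field_simp
    rw [sub_mul, one_mul, mul_assoc, ← mul_pow, div_mul_cancel₀ _ hqne]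
  rw [key]
  gcongr
end

section
/- Let F_q be a finite field and let U_0 be chosen uniformly at random among all invertible m_3 × m_3 matrices over F_q. Fix matrices K_B ∈ F_q^{m_4 × m_3} of rank m_0 and Ĥ_B ∈ F_q^{m_4 × m_1} of rank at most m_1, with m_1 < m_0 ≤ m_3, and let P ∈ F_q^{m_3 × (m_0−m_1)} be the canonical embedding [I; 0]. Then the probability that Im(K_B U_0 P) ∩ Im(Ĥ_B) = {0} is at least ∏_{i=1}^{m_0−m_1} (1 − q^{m_1 − m_0 + i − 1}) = (1 − q^{m_1−m_0})(1 − q^{m_1−m_0+1})⋯(1 − q^{−1}). -/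
open Finset

section Aux

open Submodule

theorem aux_mkQ_indep_iff {F V : Type} [Field F] [AddCommGroup V] [Module F V] {k : ℕ}
    (W : Submodule F V) (u : Fin k → V) :
    LinearIndependent F (W.mkQ ∘ u) ↔
      LinearIndependent F u ∧ Disjoint (span F (Set.range u)) W := by
  constructor
  · intro h
    refine ⟨h.of_comp W.mkQ, disjoint_iff.2 ?_⟩
    rw [eq_bot_iff]
    rintro x ⟨hx1, hx2⟩
    obtain ⟨c, rfl⟩ := (mem_span_range_iff_exists_fun F).1 hx1
    have h0 : ∑ i, c i • (W.mkQ ∘ u) i = 0 := by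
      have : W.mkQ (∑ i, c i • u i) = 0 := (Submodule.Quotient.mk_eq_zero W).2 hx2
      simpa [map_sum, map_smul] using this
    have hc := Fintype.linearIndependent_iff.1 h c h0
    simp [hc]
  · rintro ⟨h1, h2⟩
    exact h1.map (by rw [Submodule.ker_mkQ]; exact h2)

theorem aux_card_mkQ {F V : Type} [Field F] [Fintype F] [AddCommGroup V] [Module F V] [Finite V]
    (W : Submodule F V) {j : ℕ} (hj : j + Module.finrank F W ≤ Module.finrank F V) :
    Nat.card {u : Fin j → V // LinearIndependent F (W.mkQ ∘ u)} =
      ∏ i ∈ range j,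
        (Fintype.card F ^ Module.finrank F V - Fintype.card F ^ (Module.finrank F W + i)) := by
  set q := Fintype.card F
  set n := Module.finrank F V
  set w := Module.finrank F W
  haveI : Finite (V ⧸ W) := Finite.of_surjective _ (mkQ_surjective W)
  have hq : Module.finrank F (V ⧸ W) + w = n := Submodule.finrank_quotient_add_finrank W
  obtain ⟨f, hf⟩ := W.mkQ.exists_rightInverse_of_surjective
    (LinearMap.range_eq_top.2 (mkQ_surjective W))
  have hfx : ∀ x, W.mkQ (f x) = x := fun x => LinearMap.congr_fun hf x
  let E : {u : Fin j → V // LinearIndependent F (W.mkQ ∘ u)} ≃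
      {t : Fin j → V ⧸ W // LinearIndependent F t} × (Fin j → W) :=
    { toFun := fun u => ⟨⟨W.mkQ ∘ u.1, u.2⟩, fun i =>
        ⟨u.1 i - f (W.mkQ (u.1 i)), by
          refine (Submodule.Quotient.mk_eq_zero W).1 ?_
          show W.mkQ _ = 0
          simp [map_sub, hfx]⟩⟩
      invFun := fun p => ⟨fun i => f (p.1.1 i) + (p.2 i).1, by
        have he : W.mkQ ∘ (fun i => f (p.1.1 i) + (p.2 i).1) = p.1.1 := funext fun i => by
          have : W.mkQ (p.2 i).1 = 0 := (Submodule.Quotient.mk_eq_zero W).2 (p.2 i).2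
          simp [map_add, hfx, this]
        rw [he]; exact p.1.2⟩
      left_inv := fun u => Subtype.ext <| funext fun i => by simp
      right_inv := fun p => by
        refine Prod.ext (Subtype.ext <| funext fun i => ?_) (funext fun i => Subtype.ext ?_)
        · have : W.mkQ (p.2 i).1 = 0 := (Submodule.Quotient.mk_eq_zero W).2 (p.2 i).2
          simp [map_add, hfx, this]
        · have : W.mkQ (p.2 i).1 = 0 := (Submodule.Quotient.mk_eq_zero W).2 (p.2 i).2
          simp [map_add, hfx, this] }
  rw [Nat.card_congr E, Nat.card_prod]
  have h1 : Nat.card {t : Fin j → V ⧸ W // LinearIndependent F t} =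
      ∏ i ∈ range j, (q ^ (n - w) - q ^ i) := by
    rw [card_linearIndependent (by omega), show Module.finrank F (V ⧸ W) = n - w from by omega]
    exact Fin.prod_univ_eq_prod_range (fun i => q ^ (n - w) - q ^ i) j
  have hW : Nat.card W = q ^ w := by
    have := Fintype.ofFinite W
    rw [Nat.card_eq_fintype_card, Module.card_eq_pow_finrank (K := F) (V := W)]
  have h2 : Nat.card (Fin j → W) = (q ^ w) ^ j := by
    rw [Nat.card_fun, hW, Nat.card_eq_fintype_card, Fintype.card_fin]
  rw [h1, h2, show (q ^ w) ^ j = ∏ _i ∈ range j, q ^ w by simp [Finset.prod_const],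
    ← Finset.prod_mul_distrib]
  exact Finset.prod_congr rfl fun i _ => by
    rw [Nat.sub_mul, ← pow_add, ← pow_add, Nat.sub_add_cancel (by omega : w ≤ n),
      Nat.add_comm i w]

theorem aux_card_G {F : Type} [Field F] [Fintype F] [DecidableEq F] {m k : ℕ} (hk : k ≤ m)
    (W : Submodule F (Fin m → F)) (hkw : k + Module.finrank F W ≤ m) :
    Nat.card {s : Fin m → (Fin m → F) // LinearIndependent F s ∧
        Disjoint (span F (Set.range (s ∘ Fin.castLE hk))) W} =
      (∏ i ∈ range k, (Fintype.card F ^ m - Fintype.card F ^ (Module.finrank F W + i))) *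
      ∏ i ∈ range (m - k), (Fintype.card F ^ m - Fintype.card F ^ (k + i)) := by
  classical
  have hfr : Module.finrank F (Fin m → F) = m := by
    simp [Module.finrank_fintype_fun_eq_card]
  set q := Fintype.card F with hqdef
  set e : (Fin k ⊕ Fin (m - k)) ≃ Fin m :=
    finSumFinEquiv.trans (finCongr (by omega)) with he
  set E : ((Fin k → (Fin m → F)) × (Fin (m - k) → (Fin m → F))) ≃ (Fin m → (Fin m → F)) :=
    (Equiv.sumArrowEquivProdArrow (Fin k) (Fin (m - k)) (Fin m → F)).symm.trans
      (e.arrowCongr (Equiv.refl (Fin m → F))) with hE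
  have hEp : ∀ p : (Fin k → (Fin m → F)) × (Fin (m - k) → (Fin m → F)),
      E p = Sum.elim p.1 p.2 ∘ e.symm := by
    intro p; rfl
  have key : ∀ p : (Fin k → (Fin m → F)) × (Fin (m - k) → (Fin m → F)),
      (LinearIndependent F (W.mkQ ∘ p.1) ∧
        LinearIndependent F ((span F (Set.range p.1)).mkQ ∘ p.2)) ↔
      (LinearIndependent F (E p) ∧
        Disjoint (span F (Set.range ((E p) ∘ Fin.castLE hk))) W) := by
    intro p
    have h1 : E p ∘ Fin.castLE hk = p.1 := by
      funext i
      rw [hEp]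
      have : e.symm (Fin.castLE hk i) = Sum.inl i := by
        rw [Equiv.symm_apply_eq]
        ext
        simp [he]
      simp [Function.comp_apply, this]
    have h2 : LinearIndependent F (E p) ↔
        (LinearIndependent F p.1 ∧ LinearIndependent F p.2 ∧
          Disjoint (span F (Set.range p.1)) (span F (Set.range p.2))) := by
      rw [hEp, linearIndependent_equiv e.symm, linearIndependent_sum]
      simp
    rw [h1, h2, aux_mkQ_indep_iff, aux_mkQ_indep_iff]
    constructor
    · rintro ⟨⟨ht, hdW⟩, hu, hd⟩; exact ⟨⟨ht, hu, hd.symm⟩, hdW⟩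
    · rintro ⟨⟨ht, hu, hd⟩, hdW⟩; exact ⟨⟨ht, hdW⟩, hu, hd.symm⟩
  rw [← Nat.card_congr (E.subtypeEquiv key)]
  rw [Nat.card_congr (Equiv.subtypeProdEquivSigmaSubtype
      (fun (t : Fin k → (Fin m → F)) (u : Fin (m - k) → (Fin m → F)) =>
        LinearIndependent F (W.mkQ ∘ t) ∧
          LinearIndependent F ((span F (Set.range t)).mkQ ∘ u))),
    Nat.card_eq_fintype_card, Fintype.card_sigma]
  set B := ∏ i ∈ range (m - k), (q ^ m - q ^ (k + i)) with hB
  have hfib : ∀ t : Fin k → (Fin m → F),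
      Fintype.card {u : Fin (m - k) → (Fin m → F) // LinearIndependent F (W.mkQ ∘ t) ∧
          LinearIndependent F ((span F (Set.range t)).mkQ ∘ u)} =
        if LinearIndependent F (W.mkQ ∘ t) then B else 0 := by
    intro t
    by_cases h : LinearIndependent F (W.mkQ ∘ t)
    · have ht : LinearIndependent F t := ((aux_mkQ_indep_iff W t).1 h).1
      have hsp : Module.finrank F (span F (Set.range t)) = k := by
        rw [finrank_span_eq_card ht, Fintype.card_fin]
      rw [if_pos h,
        Fintype.card_congr (Equiv.subtypeEquivRight (fun u => and_iff_right h)),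
        ← Nat.card_eq_fintype_card,
        aux_card_mkQ (V := (Fin m → F)) (span F (Set.range t)) (by rw [hsp, hfr]; omega), hB]
      exact Finset.prod_congr rfl fun i _ => by rw [hfr, hsp]
    · rw [if_neg h, Fintype.card_eq_zero_iff]
      exact ⟨fun u => h u.2.1⟩
  rw [Finset.sum_congr rfl (fun t _ => hfib t), ← Finset.sum_filter, Finset.sum_const,
    smul_eq_mul, ← Fintype.card_subtype, ← Nat.card_eq_fintype_card,
    aux_card_mkQ (V := (Fin m → F)) W (by rw [hfr]; omega)]
  rw [hfr]

end Aux

/-- For a uniformly random invertible matrix `U_0 ∈ GL(m_3, F_q)`, fixed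
`K_B` of rank `m_0` and `Ĥ_B` of rank at most `m_1` with `m_1 < m_0 ≤ m_3`,
and the canonical embedding `P = [I;0]`, the probability that
`Im(K_B U_0 P) ∩ Im(Ĥ_B) = {0}` is at least
`∏_{i=1}^{m_0−m_1} (1 − q^{m_1−m_0+i−1})`. -/
theorem random_invertible_image_trivial_intersection
    {F : Type} [Field F] [Fintype F] [DecidableEq F] {q : ℕ}
    (hq : Fintype.card F = q)
    (m0 m1 m3 m4 : ℕ) (h01 : m1 < m0) (h03 : m0 ≤ m3)
    (KB : Matrix (Fin m4) (Fin m3) F) (hKB : KB.rank = m0)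
    (HB : Matrix (Fin m4) (Fin m1) F) (hHB : HB.rank ≤ m1) :
    ∏ i ∈ Finset.range (m0 - m1), (1 - (q : ℝ) ^ ((m1 : ℤ) - (m0 : ℤ) + (i : ℤ)))
      ≤ (Nat.card {U0 : Matrix (Fin m3) (Fin m3) F // IsUnit U0 ∧
            LinearMap.range
              (Matrix.mulVecLin (KB * U0 *
                Matrix.of (fun (i : Fin m3) (j : Fin (m0 - m1)) =>
                  if (i : ℕ) = (j : ℕ) then (1 : F) else 0)))
              ⊓ LinearMap.range (Matrix.mulVecLin HB) = ⊥} : ℝ)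
        / (Nat.card {U0 : Matrix (Fin m3) (Fin m3) F // IsUnit U0} : ℝ) := by
  classical
  open Submodule in
  set k := m0 - m1 with hkdef
  have hk : k ≤ m3 := by omega
  set W := Submodule.comap KB.mulVecLin (LinearMap.range HB.mulVecLin) with hWdef
  set w := Module.finrank F W with hwdef
  have hq2 : 2 ≤ q := by rw [← hq]; exact Fintype.one_lt_card
  -- finrank bound for W
  have hwle : w ≤ m3 - m0 + m1 := by
    set f := KB.mulVecLin
    set U := LinearMap.range HB.mulVecLin
    have hker : Module.finrank F (LinearMap.ker f) = m3 - m0 := by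
      have h := LinearMap.finrank_range_add_finrank_ker f
      rw [show Module.finrank F (LinearMap.range f) = m0 from hKB] at h
      have hm3 : Module.finrank F (Fin m3 → F) = m3 := by
        simp [Module.finrank_fintype_fun_eq_card]
      omega
    have h := LinearMap.finrank_range_add_finrank_ker (f.domRestrict W)
    have h1 : Module.finrank F (LinearMap.range (f.domRestrict W)) ≤ m1 := by
      have hle : LinearMap.range (f.domRestrict W) ≤ U := by
        rintro x ⟨⟨y, hy⟩, rfl⟩
        exact hy
      exact le_trans (Submodule.finrank_mono hle) hHB
    have h2 : Module.finrank F (LinearMap.ker (f.domRestrict W)) ≤ m3 - m0 := by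
      rw [LinearMap.ker_domRestrict, ← Submodule.finrank_map_subtype_eq W,
        Submodule.map_comap_subtype, ← hker]
      exact Submodule.finrank_mono inf_le_right
    omega
  have hkw : k + w ≤ m3 := by omega
  -- the injection from the counting set
  have hInj : Nat.card {s : Fin m3 → (Fin m3 → F) // LinearIndependent F s ∧
        Disjoint (span F (Set.range (s ∘ Fin.castLE hk))) W} ≤
      Nat.card {U0 : Matrix (Fin m3) (Fin m3) F // IsUnit U0 ∧
        LinearMap.range
          (Matrix.mulVecLin (KB * U0 *
            Matrix.of (fun (i : Fin m3) (j : Fin k) =>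
              if (i : ℕ) = (j : ℕ) then (1 : F) else 0)))
          ⊓ LinearMap.range (Matrix.mulVecLin HB) = ⊥} := by
    set P : Matrix (Fin m3) (Fin k) F :=
      Matrix.of (fun (i : Fin m3) (j : Fin k) =>
        if (i : ℕ) = (j : ℕ) then (1 : F) else 0) with hP
    apply Nat.card_le_card_of_injective
      (f := fun s => (⟨Matrix.of (fun i j => s.1 j i), ?_, ?_⟩ :
        {U0 : Matrix (Fin m3) (Fin m3) F // IsUnit U0 ∧
          LinearMap.range (Matrix.mulVecLin (KB * U0 * P))
            ⊓ LinearMap.range (Matrix.mulVecLin HB) = ⊥}))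
    · intro s s' hss
      apply Subtype.ext
      funext j i
      exact congrFun (congrFun (congrArg Subtype.val hss) i) j
    · exact Matrix.linearIndependent_cols_iff_isUnit.1 s.2.1
    · set U : Matrix (Fin m3) (Fin m3) F := Matrix.of (fun i j => s.1 j i) with hU
      have hUP : (U * P).transpose = s.1 ∘ Fin.castLE hk := by
        funext j i
        show (∑ l, U i l * P l j) = s.1 (Fin.castLE hk j) i
        have : ∀ l : Fin m3, U i l * P l j = if l = Fin.castLE hk j then s.1 l i else 0 := by
          intro l
          by_cases h : l = Fin.castLE hk j
          · rw [if_pos h]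
            have : (l : ℕ) = (j : ℕ) := by rw [h]; rfl
            simp [hU, hP, this]
          · rw [if_neg h]
            have : ¬ ((l : ℕ) = (j : ℕ)) := by
              intro hc
              exact h (Fin.ext (by simpa using hc))
            simp [hU, hP, this]
        rw [Finset.sum_congr rfl (fun l _ => this l), Finset.sum_ite_eq' Finset.univ]
        simp
      have hrUP : LinearMap.range ((U * P).mulVecLin) =
          span F (Set.range (s.1 ∘ Fin.castLE hk)) := by
        rw [Matrix.range_mulVecLin, ← hUP]; rfl
      rw [eq_bot_iff]
      rintro x ⟨hx1, hx2⟩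
      rw [show KB * U * P = KB * (U * P) from by rw [Matrix.mul_assoc],
        Matrix.mulVecLin_mul] at hx1
      obtain ⟨v, rfl⟩ := hx1
      rw [LinearMap.comp_apply]
      set y := (U * P).mulVecLin v with hy
      have hy1 : y ∈ span F (Set.range (s.1 ∘ Fin.castLE hk)) := by
        rw [← hrUP]; exact ⟨v, rfl⟩
      have hy2 : y ∈ W := by
        rw [hWdef, Submodule.mem_comap]
        exact hx2
      have hy0 : y = 0 := by
        have := s.2.2.le_bot ⟨hy1, hy2⟩
        simpa using this
      rw [Submodule.mem_bot]
      show KB.mulVecLin y = 0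
      rw [hy0, map_zero]
  -- numerator bound
  have hG := aux_card_G hk W hkw
  rw [hq] at hG
  rw [← hwdef] at hG
  -- denominator
  have hDen : Nat.card {U0 : Matrix (Fin m3) (Fin m3) F // IsUnit U0} =
      ∏ i ∈ range m3, (q ^ m3 - q ^ i) := by
    have E : {U0 : Matrix (Fin m3) (Fin m3) F // IsUnit U0} ≃ GL (Fin m3) F :=
      { toFun := fun x => x.2.unit
        invFun := fun u => ⟨u.1, u.isUnit⟩
        left_inv := fun x => Subtype.ext x.2.unit_spec
        right_inv := fun u => Units.ext rfl }
    rw [Nat.card_congr E, Matrix.card_GL_field, hq]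
    exact Fin.prod_univ_eq_prod_range (fun i => q ^ m3 - q ^ i) m3
  set A := ∏ i ∈ range k, (q ^ m3 - q ^ i) with hA
  set A' := ∏ i ∈ range k, (q ^ m3 - q ^ (w + i)) with hA'
  set B := ∏ i ∈ range (m3 - k), (q ^ m3 - q ^ (k + i)) with hB
  have hsplit : (∏ i ∈ range m3, (q ^ m3 - q ^ i)) = A * B := by
    rw [hA, hB, ← Finset.prod_range_add (fun i => q ^ m3 - q ^ i) k (m3 - k),
      show k + (m3 - k) = m3 by omega]
  have hApos : 0 < A := by
    apply Finset.prod_pos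
    intro i hi
    have := Finset.mem_range.1 hi
    exact Nat.sub_pos_of_lt (Nat.pow_lt_pow_right (by omega) (by omega))
  have hBpos : 0 < B := by
    apply Finset.prod_pos
    intro i hi
    have := Finset.mem_range.1 hi
    exact Nat.sub_pos_of_lt (Nat.pow_lt_pow_right (by omega) (by omega))
  have hNum : A' * B ≤ Nat.card {U0 : Matrix (Fin m3) (Fin m3) F // IsUnit U0 ∧
      LinearMap.range
        (Matrix.mulVecLin (KB * U0 *
          Matrix.of (fun (i : Fin m3) (j : Fin k) =>
            if (i : ℕ) = (j : ℕ) then (1 : F) else 0)))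
        ⊓ LinearMap.range (Matrix.mulVecLin HB) = ⊥} := by
    rw [← hG]
    exact hInj
  -- real arithmetic
  set Q := (q : ℝ) with hQ
  have hQ1 : (1 : ℝ) < Q := by
    rw [hQ]; exact_mod_cast (by omega : 1 < q)
  have hQ0 : (0 : ℝ) < Q := lt_trans one_pos hQ1
  rw [hDen, hsplit]
  have hfac : ∀ i ∈ range k,
      (1 - Q ^ ((m1 : ℤ) - (m0 : ℤ) + (i : ℤ))) ≤
        (((q ^ m3 - q ^ (w + i) : ℕ) : ℝ) / ((q ^ m3 - q ^ i : ℕ) : ℝ)) := by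
    intro i hi
    have him : i < k := Finset.mem_range.1 hi
    have hiw : w + i < m3 := by omega
    have hcast1 : ((q ^ m3 - q ^ (w + i) : ℕ) : ℝ) = Q ^ m3 - Q ^ (w + i) := by
      rw [Nat.cast_sub (Nat.pow_le_pow_right (by omega) (by omega))]
      push_cast
      rfl
    have hcast2 : ((q ^ m3 - q ^ i : ℕ) : ℝ) = Q ^ m3 - Q ^ i := by
      rw [Nat.cast_sub (Nat.pow_le_pow_right (by omega) (by omega))]
      push_cast
      rfl
    have hd2 : (0 : ℝ) < Q ^ m3 - Q ^ i := by
      have : Q ^ i < Q ^ m3 := pow_lt_pow_right₀ hQ1 (by omega)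
      linarith
    rw [hcast1, hcast2, le_div_iff₀ hd2]
    have e1 : ((w + i : ℕ) : ℤ) - (m3 : ℤ) ≤ (m1 : ℤ) - (m0 : ℤ) + (i : ℤ) := by
      omega
    have hnonneg : (0 : ℝ) ≤ 1 - Q ^ (((w + i : ℕ) : ℤ) - (m3 : ℤ)) := by
      have : Q ^ (((w + i : ℕ) : ℤ) - (m3 : ℤ)) ≤ 1 :=
        zpow_le_one_of_nonpos₀ hQ1.le (by omega)
      linarith
    calc (1 - Q ^ ((m1 : ℤ) - (m0 : ℤ) + (i : ℤ))) * (Q ^ m3 - Q ^ i)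
        ≤ (1 - Q ^ (((w + i : ℕ) : ℤ) - (m3 : ℤ))) * (Q ^ m3 - Q ^ i) := by
          apply mul_le_mul_of_nonneg_right _ hd2.le
          have := zpow_le_zpow_right₀ hQ1.le e1
          linarith
      _ ≤ (1 - Q ^ (((w + i : ℕ) : ℤ) - (m3 : ℤ))) * Q ^ m3 := by
          apply mul_le_mul_of_nonneg_left _ hnonneg
          have : (0 : ℝ) ≤ Q ^ i := by positivity
          linarith
      _ = Q ^ m3 - Q ^ (w + i) := by
          rw [sub_mul, one_mul, ← zpow_natCast Q m3,
            ← zpow_add₀ (ne_of_gt hQ0),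
            show ((w + i : ℕ) : ℤ) - (m3 : ℤ) + (m3 : ℤ) = ((w + i : ℕ) : ℤ) by ring]
          norm_cast
  have h0 : ∀ i ∈ range k, (0 : ℝ) ≤ 1 - Q ^ ((m1 : ℤ) - (m0 : ℤ) + (i : ℤ)) := by
    intro i hi
    have him : i < k := Finset.mem_range.1 hi
    have : Q ^ ((m1 : ℤ) - (m0 : ℤ) + (i : ℤ)) ≤ 1 :=
      zpow_le_one_of_nonpos₀ hQ1.le (by omega)
    linarith
  calc ∏ i ∈ range k, (1 - Q ^ ((m1 : ℤ) - (m0 : ℤ) + (i : ℤ)))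
      ≤ ∏ i ∈ range k, (((q ^ m3 - q ^ (w + i) : ℕ) : ℝ) / ((q ^ m3 - q ^ i : ℕ) : ℝ)) :=
        Finset.prod_le_prod h0 hfac
    _ = (A' : ℝ) / (A : ℝ) := by
        rw [Finset.prod_div_distrib, hA', hA, Nat.cast_prod, Nat.cast_prod]
    _ = ((A' * B : ℕ) : ℝ) / ((A * B : ℕ) : ℝ) := by
        push_cast
        rw [mul_div_mul_right]
        exact_mod_cast hBpos.ne'
    _ ≤ _ := by
        have hABpos : (0 : ℝ) < ((A * B : ℕ) : ℝ) := Nat.cast_pos.2 (Nat.mul_pos hApos hBpos)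
        exact (div_le_div_iff_of_pos_right hABpos).2 (Nat.cast_le.2 hNum)
end

section
/- Let M be a random message uniformly distributed on F_q^{k} and let Y be any random variable such that Y takes values determined by an F_q-linear function of (M, L) for an independent uniform scramble L (linear network with linear code). Then the mutual information I(M; Y) is an integer multiple of log q. Consequently, if I(M; Y) < log q, then I(M; Y) = 0, i.e., M and Y are independent. -/
open Finset

/-- Shannon mutual information `I(f(Ω); g(Ω))` for a probability mass function `p`
on a finite sample space `Ω`, computed from the induced joint distribution. -/
noncomputable def mutualInfo {Ω A B : Type*} [Fintype Ω] [Fintype A] [Fintype B]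
    [DecidableEq A] [DecidableEq B]
    (p : Ω → ℝ) (f : Ω → A) (g : Ω → B) : ℝ :=
  ∑ a : A, ∑ b : B,
    (∑ ω ∈ Finset.univ.filter (fun ω => f ω = a ∧ g ω = b), p ω) *
      Real.log ((∑ ω ∈ Finset.univ.filter (fun ω => f ω = a ∧ g ω = b), p ω) /
        ((∑ ω ∈ Finset.univ.filter (fun ω => f ω = a), p ω) *
         (∑ ω ∈ Finset.univ.filter (fun ω => g ω = b), p ω)))

section Aux
variable {K V W : Type*} [Field K] [Fintype K] [AddCommGroup V] [Module K V]
  [AddCommGroup W] [Module K W]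

omit [Fintype K] in
lemma aux_fiber_card [Fintype V] [DecidableEq W] (f : V →ₗ[K] W) {v0 : V} {y : W}
    (h : f v0 = y) :
    (Finset.univ.filter (fun v => f v = y)).card = Nat.card (LinearMap.ker f) := by
  classical
  rw [← Fintype.card_subtype, ← Nat.card_eq_fintype_card]
  exact Nat.card_congr
    { toFun := fun v => ⟨v.1 - v0, by
        have hv := v.2
        simp only [LinearMap.mem_ker, map_sub, hv, h, sub_self]⟩
      invFun := fun u => ⟨u.1 + v0, by
        have hu := u.2
        rw [LinearMap.mem_ker] at hu
        simp [map_add, hu, h]⟩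
      left_inv := fun v => by simp
      right_inv := fun u => by simp }

lemma aux_card_ker_mul [Fintype V] (f : V →ₗ[K] W) :
    Nat.card (LinearMap.ker f) * Fintype.card K ^ Module.finrank K (LinearMap.range f)
      = Fintype.card V := by
  classical
  rw [Nat.card_eq_fintype_card, Module.card_eq_pow_finrank (K := K) (V := LinearMap.ker f),
    ← pow_add, add_comm, LinearMap.finrank_range_add_finrank_ker,
    ← Module.card_eq_pow_finrank (K := K) (V := V)]

end Aux

set_option maxHeartbeats 1000000 in
/-- For a uniform message `M ∈ F_q^k`, an independent uniform scramble
`L ∈ F_q^ℓ`, and a linear observation `Y = A·(M,L)ᵀ`, the mutual information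
`I(M; Y)` is an integer multiple of `log q`; consequently, if
`I(M; Y) < log q` then `I(M; Y) = 0`. -/
theorem linear_leak_is_multiple_of_log_q
    {F : Type} [Field F] [Fintype F] [DecidableEq F] {q : ℕ}
    (hq : Fintype.card F = q)
    (k ℓ mo : ℕ)
    (A : Matrix (Fin mo) (Fin k ⊕ Fin ℓ) F) :
    (∃ d : ℕ,
      mutualInfo
        (fun _ : (Fin k → F) × (Fin ℓ → F) =>
          (1 : ℝ) / (Fintype.card ((Fin k → F) × (Fin ℓ → F)) : ℝ))
        Prod.fst (fun ω => A.mulVec (Sum.elim ω.1 ω.2))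
      = (d : ℝ) * Real.log q) ∧
    (mutualInfo
        (fun _ : (Fin k → F) × (Fin ℓ → F) =>
          (1 : ℝ) / (Fintype.card ((Fin k → F) × (Fin ℓ → F)) : ℝ))
        Prod.fst (fun ω => A.mulVec (Sum.elim ω.1 ω.2)) < Real.log q →
      mutualInfo
        (fun _ : (Fin k → F) × (Fin ℓ → F) =>
          (1 : ℝ) / (Fintype.card ((Fin k → F) × (Fin ℓ → F)) : ℝ))
        Prod.fst (fun ω => A.mulVec (Sum.elim ω.1 ω.2)) = 0) := by
  subst hq
  set q := Fintype.card F with hqdef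
  -- the linear map Ψ(m, l) = A ⬝ (m, l)
  set Ψ : ((Fin k → F) × (Fin ℓ → F)) →ₗ[F] (Fin mo → F) :=
    { toFun := fun ω => A.mulVec (Sum.elim ω.1 ω.2)
      map_add' := fun x y => by
        have hx : Sum.elim (x + y).1 (x + y).2
            = (Sum.elim x.1 x.2 + Sum.elim y.1 y.2 : Fin k ⊕ Fin ℓ → F) := by
          funext s; cases s <;> rfl
        show A.mulVec _ = A.mulVec _ + A.mulVec _
        rw [hx, Matrix.mulVec_add]
      map_smul' := fun c x => by
        have hx : Sum.elim (c • x).1 (c • x).2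
            = (c • Sum.elim x.1 x.2 : Fin k ⊕ Fin ℓ → F) := by
          funext s; cases s <;> rfl
        show A.mulVec _ = _
        rw [hx, Matrix.mulVec_smul]
        rfl }
    with hΨdef
  have hΨ : ∀ ω : (Fin k → F) × (Fin ℓ → F), A.mulVec (Sum.elim ω.1 ω.2) = Ψ ω :=
    fun ω => rfl
  set B : (Fin ℓ → F) →ₗ[F] (Fin mo → F) :=
    Ψ ∘ₗ LinearMap.inr F (Fin k → F) (Fin ℓ → F) with hBdef
  have hsplit : ∀ (m : Fin k → F) (l : Fin ℓ → F), Ψ (m, l) = Ψ (m, 0) + B l := by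
    intro m l
    have hpair : (m, l) = ((m, (0 : Fin ℓ → F)) + ((0 : Fin k → F), l)) := by
      rw [Prod.mk_add_mk, add_zero, zero_add]
    rw [hpair, map_add]
    rfl
  have hrange : LinearMap.range B ≤ LinearMap.range Ψ := LinearMap.range_comp_le_range _ _
  set rb := Module.finrank F (LinearMap.range B) with hrbdef
  set rp := Module.finrank F (LinearMap.range Ψ) with hrpdef
  have hle : rb ≤ rp := Submodule.finrank_mono hrange
  set r := rp - rb with hrdef
  have hrp : rp = rb + r := by omega
  have hq2 : 1 < q := Fintype.one_lt_card
  have hq0 : 0 < q := by omega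
  set Kb := Nat.card (LinearMap.ker B) with hKbdef
  set Kp := Nat.card (LinearMap.ker Ψ) with hKpdef
  have hKb : Kb * q ^ rb = q ^ ℓ := by
    have h := aux_card_ker_mul B
    rwa [show Fintype.card (Fin ℓ → F) = q ^ ℓ by simp [Fintype.card_fun, hqdef]] at h
  have hN : Fintype.card ((Fin k → F) × (Fin ℓ → F)) = q ^ (k + ℓ) := by
    simp [Fintype.card_fun, pow_add, hqdef]
  have hKp : Kp * q ^ rp = q ^ (k + ℓ) := by
    have h := aux_card_ker_mul Ψ
    rwa [hN] at h
  have hkey : Kb * q ^ k = q ^ r * Kp := by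
    have hpos : 0 < q ^ rp := pow_pos hq0 rp
    apply Nat.eq_of_mul_eq_mul_right hpos
    calc Kb * q ^ k * q ^ rp = (Kb * q ^ rb) * (q ^ k * q ^ r) := by rw [hrp, pow_add]; ring
      _ = q ^ ℓ * (q ^ k * q ^ r) := by rw [hKb]
      _ = q ^ r * (Kp * q ^ rp) := by rw [hKp, pow_add]; ring
      _ = q ^ r * Kp * q ^ rp := by ring
  have hKppos : 0 < Kp := Nat.card_pos
  -- abbreviations for real quantities
  have hNposR : (0 : ℝ) < (Fintype.card ((Fin k → F) × (Fin ℓ → F)) : ℝ) := by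
    exact_mod_cast Fintype.card_pos
  have hsumconst : ∀ (s : Finset ((Fin k → F) × (Fin ℓ → F))),
      (∑ _ω ∈ s, (1 : ℝ) / (Fintype.card ((Fin k → F) × (Fin ℓ → F)) : ℝ))
        = (s.card : ℝ) / (Fintype.card ((Fin k → F) × (Fin ℓ → F)) : ℝ) := by
    intro s
    rw [Finset.sum_const, nsmul_eq_mul]
    ring
  classical
  -- the key identity
  have key : mutualInfo
      (fun _ : (Fin k → F) × (Fin ℓ → F) =>
        (1 : ℝ) / (Fintype.card ((Fin k → F) × (Fin ℓ → F)) : ℝ))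
      Prod.fst (fun ω => A.mulVec (Sum.elim ω.1 ω.2)) = (r : ℝ) * Real.log q := by
    rw [mutualInfo]
    simp only [hΨ, hsumconst]
    have hterm : ∀ (a : Fin k → F) (b : Fin mo → F),
        ((Finset.univ.filter (fun ω : (Fin k → F) × (Fin ℓ → F) => ω.1 = a ∧ Ψ ω = b)).card : ℝ)
            / (Fintype.card ((Fin k → F) × (Fin ℓ → F)) : ℝ) *
          Real.log
            ((((Finset.univ.filter (fun ω : (Fin k → F) × (Fin ℓ → F) => ω.1 = a ∧ Ψ ω = b)).card : ℝ)
              / (Fintype.card ((Fin k → F) × (Fin ℓ → F)) : ℝ)) /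
              ((((Finset.univ.filter (fun ω : (Fin k → F) × (Fin ℓ → F) => ω.1 = a)).card : ℝ)
                  / (Fintype.card ((Fin k → F) × (Fin ℓ → F)) : ℝ)) *
               (((Finset.univ.filter (fun ω : (Fin k → F) × (Fin ℓ → F) => Ψ ω = b)).card : ℝ)
                  / (Fintype.card ((Fin k → F) × (Fin ℓ → F)) : ℝ))))
        = ((Finset.univ.filter (fun ω : (Fin k → F) × (Fin ℓ → F) => ω.1 = a ∧ Ψ ω = b)).card : ℝ)
            / (Fintype.card ((Fin k → F) × (Fin ℓ → F)) : ℝ) * ((r : ℝ) * Real.log q) := by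
      intro a b
      rcases Finset.eq_empty_or_nonempty
        (Finset.univ.filter (fun ω : (Fin k → F) × (Fin ℓ → F) => ω.1 = a ∧ Ψ ω = b)) with he | hne
      · rw [he]; simp
      · obtain ⟨ω₀, hω₀⟩ := hne
        obtain ⟨ha0, hb0⟩ := (Finset.mem_filter.mp hω₀).2
        have hB0 : B ω₀.2 = b - Ψ (a, 0) := by
          have h1 : Ψ (a, ω₀.2) = b := by
            rw [← ha0]
            exact hb0
          exact eq_sub_of_add_eq' ((hsplit a ω₀.2).symm.trans h1)
        -- joint count
        have hc₁ : (Finset.univ.filter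
            (fun ω : (Fin k → F) × (Fin ℓ → F) => ω.1 = a ∧ Ψ ω = b)).card = Kb := by
          calc (Finset.univ.filter
                (fun ω : (Fin k → F) × (Fin ℓ → F) => ω.1 = a ∧ Ψ ω = b)).card
              = Fintype.card {ω : (Fin k → F) × (Fin ℓ → F) // ω.1 = a ∧ Ψ ω = b} :=
                (Fintype.card_subtype _).symm
            _ = Fintype.card {l : Fin ℓ → F // B l = b - Ψ (a, 0)} := Fintype.card_congr
                { toFun := fun ω => ⟨ω.1.2, by
                    obtain ⟨⟨m1, l1⟩, hm, hb2⟩ := ω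
                    dsimp only at hm hb2 ⊢
                    subst hm
                    exact eq_sub_of_add_eq' ((hsplit _ _).symm.trans hb2)⟩
                  invFun := fun l => ⟨(a, l.1), ⟨rfl, by
                    rw [hsplit, l.2, add_sub_cancel]⟩⟩
                  left_inv := fun ω => by
                    apply Subtype.ext
                    exact Prod.ext ω.2.1.symm rfl
                  right_inv := fun l => rfl }
            _ = (Finset.univ.filter (fun l : Fin ℓ → F => B l = b - Ψ (a, 0))).card :=
                Fintype.card_subtype _
            _ = Kb := aux_fiber_card B hB0
        -- message marginal count
        have hc₂ : (Finset.univ.filter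
            (fun ω : (Fin k → F) × (Fin ℓ → F) => ω.1 = a)).card = q ^ ℓ := by
          calc (Finset.univ.filter (fun ω : (Fin k → F) × (Fin ℓ → F) => ω.1 = a)).card
              = Fintype.card {ω : (Fin k → F) × (Fin ℓ → F) // ω.1 = a} :=
                (Fintype.card_subtype _).symm
            _ = Fintype.card (Fin ℓ → F) := Fintype.card_congr
                { toFun := fun ω => ω.1.2
                  invFun := fun l => ⟨(a, l), rfl⟩
                  left_inv := fun ω => by
                    apply Subtype.ext
                    exact Prod.ext ω.2.symm rfl
                  right_inv := fun l => rfl }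
            _ = q ^ ℓ := by simp [Fintype.card_fun, hqdef]
        -- observation marginal count
        have hc₃ : (Finset.univ.filter
            (fun ω : (Fin k → F) × (Fin ℓ → F) => Ψ ω = b)).card = Kp :=
          aux_fiber_card Ψ hb0
        rw [hc₁, hc₂, hc₃]
        have hkeyR : (Kb : ℝ) * (q : ℝ) ^ k = (q : ℝ) ^ r * (Kp : ℝ) := by exact_mod_cast hkey
        have hNvalR : ((Fintype.card ((Fin k → F) × (Fin ℓ → F)) : ℕ) : ℝ)
            = (q : ℝ) ^ (k + ℓ) := by exact_mod_cast hN
        have hKpR : (0 : ℝ) < (Kp : ℝ) := by exact_mod_cast hKppos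
        have hqR : (0 : ℝ) < (q : ℝ) := by exact_mod_cast hq0
        have hratio : ((Kb : ℝ) / (Fintype.card ((Fin k → F) × (Fin ℓ → F)) : ℝ)) /
            ((((q : ℕ) ^ ℓ : ℕ) : ℝ) / (Fintype.card ((Fin k → F) × (Fin ℓ → F)) : ℝ) *
              ((Kp : ℝ) / (Fintype.card ((Fin k → F) × (Fin ℓ → F)) : ℝ)))
            = (q : ℝ) ^ r := by
          rw [hNvalR]
          push_cast
          rw [pow_add]
          field_simp
          linear_combination hkeyR
        rw [hratio, Real.log_pow]
    rw [Finset.sum_congr rfl fun a _ => Finset.sum_congr rfl fun b _ => hterm a b]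
    -- pull the constant out and sum the probabilities
    have htotal : ∑ a : Fin k → F, ∑ b : Fin mo → F,
        ((Finset.univ.filter
          (fun ω : (Fin k → F) × (Fin ℓ → F) => ω.1 = a ∧ Ψ ω = b)).card : ℕ)
        = Fintype.card ((Fin k → F) × (Fin ℓ → F)) := by
      have hfib := Finset.sum_fiberwise (Finset.univ : Finset ((Fin k → F) × (Fin ℓ → F)))
        (fun ω => (ω.1, Ψ ω)) (fun _ => (1 : ℕ))
      simp only [Fintype.sum_prod_type, Prod.mk.injEq] at hfib
      simp only [Finset.card_eq_sum_ones]
      rw [hfib]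
      simp [Finset.card_univ, Fintype.card_prod, mul_comm]
    have : ∑ a : Fin k → F, ∑ b : Fin mo → F,
        (((Finset.univ.filter
          (fun ω : (Fin k → F) × (Fin ℓ → F) => ω.1 = a ∧ Ψ ω = b)).card : ℝ)
            / (Fintype.card ((Fin k → F) × (Fin ℓ → F)) : ℝ) * ((r : ℝ) * Real.log q))
        = ((∑ a : Fin k → F, ∑ b : Fin mo → F,
            ((Finset.univ.filter
              (fun ω : (Fin k → F) × (Fin ℓ → F) => ω.1 = a ∧ Ψ ω = b)).card : ℝ))
            / (Fintype.card ((Fin k → F) × (Fin ℓ → F)) : ℝ)) * ((r : ℝ) * Real.log q) := by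
      rw [Finset.sum_div, Finset.sum_mul]
      congr 1 with a
      rw [Finset.sum_div, Finset.sum_mul]
    rw [this]
    have htotR : ∑ a : Fin k → F, ∑ b : Fin mo → F,
        ((Finset.univ.filter
          (fun ω : (Fin k → F) × (Fin ℓ → F) => ω.1 = a ∧ Ψ ω = b)).card : ℝ)
        = (Fintype.card ((Fin k → F) × (Fin ℓ → F)) : ℝ) := by
      exact_mod_cast htotal
    rw [htotR, div_self (ne_of_gt hNposR), one_mul]
  refine ⟨⟨r, key⟩, ?_⟩
  intro hlt
  rw [key] at hlt ⊢
  have hlog : 0 < Real.log q := Real.log_pos (by exact_mod_cast hq2)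
  have hr1 : (r : ℝ) < 1 := by
    by_contra hcon
    push_neg at hcon
    nlinarith
  have : r = 0 := by exact_mod_cast Nat.lt_one_iff.mp (by exact_mod_cast hr1)
  rw [this]
  simp
end
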